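/- Let S be a string in which the character σ occurs exactly ℓ ≥ 2 times, and let Y be an Algorithm-1 output for S and σ. Then the square subsequence YY of S is not inner-extendable; that is, there are no character y and nonempty strings Y₁, Y₂ with Y = Y₁Y₂ such that Y₁yY₂Y₁yY₂ is a subsequence of S. -/

import Mathlib

open List

variable {α : Type*}

/-- The substring of `S` from 1-indexed position `a` to position `b`, inclusive
(empty when `a > b`). -/
def substr (S : List α) (a b : ℕ) : List α := (S.drop (a - 1)).take (b + 1 - a)

/-- `X` is a square subsequence of `S`. -/
def IsSquareSubseq (S X : List α) : Prop := (∃ Y, X = Y ++ Y) ∧ X <+ S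

/-- `X` is a maximal square subsequence of `S`: it is a square subsequence of `S` and
is not a proper subsequence of any other square subsequence of `S`. -/
def IsMaxSquareSubseq (S X : List α) : Prop :=
  IsSquareSubseq S X ∧ ∀ X', IsSquareSubseq S X' → X <+ X' → X' = X

/-- The square subsequence `Y ++ Y` is right-extendable in `S`. -/
def RightExtendable (S Y : List α) : Prop := ∃ y : α, Y ++ [y] ++ Y ++ [y] <+ S

/-- The square subsequence `Y ++ Y` is left-extendable in `S`. -/
def LeftExtendable (S Y : List α) : Prop := ∃ y : α, [y] ++ Y ++ [y] ++ Y <+ S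

/-- The square subsequence `Y ++ Y` is inner-extendable in `S`. -/
def InnerExtendable (S Y : List α) : Prop :=
  ∃ (y : α) (Y₁ Y₂ : List α), Y = Y₁ ++ Y₂ ∧ Y₁ ≠ [] ∧ Y₂ ≠ [] ∧
    Y₁ ++ [y] ++ Y₂ ++ Y₁ ++ [y] ++ Y₂ <+ S

/-- `X` is a `k`-repeating subsequence of `S`: the `k`-fold concatenation of `X`
is a subsequence of `S`. -/
def IsKRep (k : ℕ) (S X : List α) : Prop := (List.replicate k X).flatten <+ S

/-- `X` is a maximal `k`-repeating subsequence of `S`: the only `k`-repeating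
subsequence of `S` having `X` as a subsequence is `X` itself. -/
def IsMaxKRep (k : ℕ) (S X : List α) : Prop :=
  IsKRep k S X ∧ ∀ Y, IsKRep k S Y → X <+ Y → Y = X

/-- A `σ`-split point for `A` and `B` in `S`: a strictly increasing `k`-tuple of
1-indexed positions of `S` carrying `σ`, such that around each position `p i` one
can place `A` immediately to its left and `B` immediately to its right within a
window `[a i, b i]`, with consecutive windows disjoint (`b i < a (i+1)`). -/
def IsSplitPoint (S : List α) (σ : α) (A B : List α) (k : ℕ) (p : Fin k → ℕ) : Prop :=
  StrictMono p ∧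
  (∀ i, 1 ≤ p i ∧ p i ≤ S.length ∧ substr S (p i) (p i) = [σ]) ∧
  ∃ a b : Fin k → ℕ,
    (∀ i, 1 ≤ a i ∧ a i ≤ p i ∧ p i ≤ b i ∧ b i ≤ S.length ∧
      A <+ substr S (a i) (p i - 1) ∧ B <+ substr S (p i + 1) (b i)) ∧
    ∀ i j : Fin k, (i : ℕ) + 1 = (j : ℕ) → b i < a j

/-- A `σ`-start for `σ^r` in `S`: a strictly increasing `k`-tuple of 1-indexed
positions of `S` carrying `σ`, such that (with `p (k+1) = |S| + 1`) the string
`σ^r` is a subsequence of `S[p j .. p (j+1) − 1]` for every `j`. -/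
def IsSigmaStart (S : List α) (σ : α) (r k : ℕ) (p : Fin k → ℕ) : Prop :=
  StrictMono p ∧
  (∀ i, 1 ≤ p i ∧ p i ≤ S.length ∧ substr S (p i) (p i) = [σ]) ∧
  ∀ i : Fin k, List.replicate r σ <+
    substr S (p i) ((if h : (i : ℕ) + 1 < k then p ⟨(i : ℕ) + 1, h⟩ else S.length + 1) - 1)

/-- `W` is a maximal common subsequence of `T₁` and `T₂` containing `X`. -/
def IsMCSContaining (T₁ T₂ X W : List α) : Prop :=
  X <+ W ∧ W <+ T₁ ∧ W <+ T₂ ∧ ∀ W', W <+ W' → W' <+ T₁ → W' <+ T₂ → W' = W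

/-- `p` is the 1-indexed position of the `t`-th occurrence (1-indexed `t`) of `σ` in `S`:
`S[p] = σ` and exactly `t - 1` occurrences of `σ` lie strictly before position `p`. -/
def NthOccPos [DecidableEq α] (S : List α) (σ : α) (t p : ℕ) : Prop :=
  1 ≤ p ∧ p ≤ S.length ∧ substr S p p = [σ] ∧ (substr S 1 (p - 1)).count σ = t - 1

/-- `j` is the leftmost anchor of `Y` with position `i` in `S`: the smallest index `j`
such that `Y` is a subsequence of `S[i..j]`. -/
def LeftmostAnchor (S Y : List α) (i j : ℕ) : Prop :=
  Y <+ substr S i j ∧ ∀ j', Y <+ substr S i j' → j ≤ j'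

/-- `Y` is an Algorithm-1 output for `S` and `σ` (Algorithm 1 of the paper), where
`ℓ = count σ S` and `e = ⌊ℓ/2⌋`. -/
def Alg1Output [DecidableEq α] (S : List α) (σ : α) (Y : List α) : Prop :=
  ∃ (i1 ie1 : ℕ) (Y₀ : List α),
    NthOccPos S σ 1 i1 ∧
    NthOccPos S σ (S.count σ / 2 + 1) ie1 ∧
    IsMCSContaining (substr S i1 (ie1 - 1)) (substr S ie1 S.length)
      (List.replicate (S.count σ / 2) σ) Y₀ ∧
    ((Y = Y₀ ∧ (Odd (S.count σ) → ∀ ie2, NthOccPos S σ (S.count σ / 2 + 2) ie2 →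
        ¬ Y₀ <+ substr S ie2 S.length)) ∨
     (Odd (S.count σ) ∧ ∃ ie2, NthOccPos S σ (S.count σ / 2 + 2) ie2 ∧
        Y₀ <+ substr S ie2 S.length ∧
        IsMCSContaining (substr S i1 (ie2 - 1)) (substr S ie2 S.length) Y₀ Y))

/-- `Z` is an Algorithm-2 output for `S` and `σ` built from the Algorithm-1 output `Y`
(Algorithm 2 of the paper). -/
def Alg2Output [DecidableEq α] (S : List α) (σ : α) (Y Z : List α) : Prop :=
  ∃ (i1 i2 j1 : ℕ) (Z₀ : List α),
    NthOccPos S σ 1 i1 ∧ NthOccPos S σ 2 i2 ∧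
    LeftmostAnchor S Y i1 j1 ∧
    IsMCSContaining (substr S 1 j1) (substr S (j1 + 1) S.length) Y Z₀ ∧
    ((Z = Z₀ ∧ (Odd (S.count σ) → ∀ j2, LeftmostAnchor S Y i2 j2 →
        ¬ Z₀ <+ substr S (j2 + 1) S.length)) ∨
     (Odd (S.count σ) ∧ ∃ j2, LeftmostAnchor S Y i2 j2 ∧
        Z₀ <+ substr S (j2 + 1) S.length ∧
        IsMCSContaining (substr S 1 j2) (substr S (j2 + 1) S.length) Z₀ Z))

/-- If `σ` occurs exactly `ℓ ≥ 2` times in `S` and `Y` is an Algorithm-1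
output for `S` and `σ`, then the square subsequence `YY` of `S` is not inner-extendable. -/
lemma sublist_split {l₁ l₂ r : List α} (h : l₁ ++ l₂ <+ r) :
    ∃ r₁ r₂, r = r₁ ++ r₂ ∧ l₁ <+ r₁ ∧ l₂ <+ r₂ := by
  induction r generalizing l₁ with
  | nil =>
    have h0 := List.eq_nil_of_sublist_nil h
    rcases List.append_eq_nil_iff.mp h0 with ⟨h1, h2⟩
    exact ⟨[], [], rfl, by simp [h1], by simp [h2]⟩
  | cons a r ih =>
    cases l₁ with
    | nil => exact ⟨[], a :: r, rfl, List.nil_sublist _, h⟩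
    | cons b t =>
      cases h with
      | cons _ h' =>
        obtain ⟨r₁, r₂, hr, h1, h2⟩ := ih h'
        exact ⟨a :: r₁, r₂, by simp [hr], h1.cons a, h2⟩
      | cons_cons _ h' =>
        obtain ⟨r₁, r₂, hr, h1, h2⟩ := ih h'
        exact ⟨a :: r₁, r₂, by simp [hr], h1.cons_cons a, h2⟩

lemma skip_prefix [DecidableEq α] {σ : α} {V' P Q : List α} (h : σ :: V' <+ P ++ Q)
    (hP : P.count σ = 0) : σ :: V' <+ Q := by
  obtain ⟨l₁, l₂, heq, h₁, h₂⟩ := List.sublist_append_iff.mp h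
  cases l₁ with
  | nil =>
    simp only [List.nil_append] at heq
    rwa [heq]
  | cons x t =>
    injection heq with hx ht
    have hc := h₁.count_le σ
    rw [hP, hx] at hc
    simp at hc

lemma coreL [DecidableEq α] {σ : α} {V' A B S₁ S₂ : List α}
    (hS : S₁ ++ S₂ = A ++ (σ :: B))
    (hc : S₂.count σ = (σ :: B).count σ)
    (h2 : σ :: V' <+ S₂) : σ :: V' <+ σ :: B := by
  rcases List.append_eq_append_iff.mp hS with ⟨M, hA, hM⟩ | ⟨M, hS₁, hM⟩
  · have hM0 : M.count σ = 0 := by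
      have := congrArg (List.count σ) hM
      rw [List.count_append] at this; omega
    exact skip_prefix (hM ▸ h2) hM0
  · exact h2.trans (hM ▸ List.sublist_append_right M S₂)

lemma coreR [DecidableEq α] {σ : α} {V' P T B S₁ S₂ : List α}
    (hS : S₁ ++ S₂ = (P ++ T) ++ (σ :: B))
    (hP : P.count σ = 0)
    (hc : S₁.count σ = P.count σ + T.count σ)
    (h1 : σ :: V' <+ S₁) : σ :: V' <+ T := by
  rcases List.append_eq_append_iff.mp hS with ⟨M, hA, hM⟩ | ⟨M, hS₁, hM⟩
  · have : σ :: V' <+ P ++ T := h1.trans (hA ▸ (List.sublist_append_left S₁ M))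
    exact skip_prefix this hP
  · have hM0 : M.count σ = 0 := by
      have := congrArg (List.count σ) hS₁
      rw [List.count_append, List.count_append] at this; omega
    cases M with
    | nil => simp at hS₁; exact skip_prefix (hS₁ ▸ h1) hP
    | cons x t =>
      injection hM with hx _
      rw [← hx] at hM0; simp at hM0

lemma head_sigma [DecidableEq α] {σ : α} {V T : List α} (h : V <+ σ :: T)
    (hc : (σ :: T).count σ ≤ V.count σ) : ∃ V', V = σ :: V' := by
  cases h with
  | cons _ h' =>
    have := h'.count_le σ
    simp [List.count_cons] at hc
    omega
  | cons_cons _ h' => exact ⟨_, rfl⟩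

lemma exists_first [DecidableEq α] {σ : α} {L : List α} (h : L.count σ ≠ 0) :
    ∃ U R, L = U ++ σ :: R ∧ U.count σ = 0 := by
  induction L with
  | nil => simp at h
  | cons x t ih =>
    by_cases hx : x = σ
    · exact ⟨[], t, by simp [hx], by simp⟩
    · rw [List.count_cons] at h
      simp [hx] at h
      obtain ⟨U, R, hL, hU⟩ := ih (by simpa using h)
      exact ⟨x :: U, R, by simp [hL], by simp [List.count_cons, hU, hx]⟩

lemma substr_suffix (A B : List α) : substr (A ++ B) (A.length + 1) (A ++ B).length = B := by
  simp [substr, List.drop_left]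

lemma substr_mid (A C D : List α) :
    substr (A ++ (C ++ D)) (A.length + 1) (A.length + C.length) = C := by
  simp only [substr, Nat.add_sub_cancel,
    show A.length + C.length + 1 - (A.length + 1) = C.length from by omega,
    List.append_assoc]
  rw [List.drop_left, List.take_left]

lemma nthOcc_of [DecidableEq α] (A B : List α) (σ : α) :
    NthOccPos (A ++ σ :: B) σ (A.count σ + 1) (A.length + 1) := by
  refine ⟨by omega, by simp, ?_, ?_⟩
  · simp [substr, List.drop_left]
  · simp only [substr, Nat.add_sub_cancel, Nat.sub_self, List.drop_zero]
    rw [List.take_left]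

lemma nthOcc_dest [DecidableEq α] {S : List α} {σ : α} {t p : ℕ} (h : NthOccPos S σ t p) :
    ∃ A B, S = A ++ σ :: B ∧ A.count σ = t - 1 ∧ p = A.length + 1 := by
  obtain ⟨h1, h2, h3, h4⟩ := h
  have h3' : List.take 1 (S.drop (p-1)) = [σ] := by
    simpa [substr, show p + 1 - p = 1 by omega] using h3
  cases hd : S.drop (p-1) with
  | nil => rw [hd] at h3'; simp at h3'
  | cons a l =>
    rw [hd] at h3'
    have ha : a = σ := by simpa using h3'
    have hlen : (S.take (p-1)).length = p - 1 := by
      rw [List.length_take]; omega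
    refine ⟨S.take (p-1), l, ?_, ?_, by omega⟩
    · rw [← ha, ← hd, List.take_append_drop]
    · have : substr S 1 (p-1) = S.take (p-1) := by
        simp [substr]
      rw [← this, h4]

lemma common_V [DecidableEq α] {σ y : α} {S Y Y₁ Y₂ Yt : List α}
    (hsub : Y₁ ++ [y] ++ Y₂ ++ Y₁ ++ [y] ++ Y₂ <+ S)
    (hYsplit : Y = Y₁ ++ Y₂) (hY₁ne : Y₁ ≠ [])
    (hYhead : Y = σ :: Yt)
    (hYcnt : Y.count σ = S.count σ / 2) :
    ∃ V' S₁ S₂, Y <+ σ :: V' ∧ (σ :: V').length = Y.length + 1 ∧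
      (σ :: V').count σ = S.count σ / 2 ∧
      S = S₁ ++ S₂ ∧ (σ :: V') <+ S₁ ∧ (σ :: V') <+ S₂ ∧
      S.count σ / 2 ≤ S₁.count σ ∧ S.count σ / 2 ≤ S₂.count σ ∧
      S₁.count σ + S₂.count σ = S.count σ := by
  have hdiv := Nat.div_add_mod (S.count σ) 2
  have hmod : S.count σ % 2 < 2 := Nat.mod_lt _ (by norm_num)
  obtain ⟨a, t, rfl⟩ : ∃ a t, Y₁ = a :: t := by
    cases Y₁ with
    | nil => exact absurd rfl hY₁ne
    | cons a t => exact ⟨a, t, rfl⟩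
  have hcons : a :: (t ++ Y₂) = σ :: Yt := by
    rw [← List.cons_append, ← hYsplit, hYhead]
  injection hcons with ha hYt
  have ha2 := ha.symm
  subst ha2
  have hYe : t.count σ + Y₂.count σ + 1 = S.count σ / 2 := by
    have h := hYcnt
    rw [hYsplit] at h
    simp [List.count_append, List.count_cons_self] at h
    omega
  have hsub2 : (σ :: (t ++ y :: Y₂)) ++ (σ :: (t ++ y :: Y₂)) <+ S := by
    have heq : σ :: t ++ [y] ++ Y₂ ++ (σ :: t) ++ [y] ++ Y₂
        = (σ :: (t ++ y :: Y₂)) ++ (σ :: (t ++ y :: Y₂)) := by simp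
    rwa [heq] at hsub
  have hyne : y ≠ σ := by
    intro h
    have h2 := h.symm
    subst h2
    have hc := hsub2.count_le σ
    simp [List.count_append, List.count_cons_self] at hc
    omega
  have hVcnt : (σ :: (t ++ y :: Y₂)).count σ = S.count σ / 2 := by
    simp [List.count_append, List.count_cons, hyne, beq_iff_eq]
    omega
  obtain ⟨S₁, S₂, hSsplit, hs1, hs2⟩ := sublist_split hsub2
  have hc1 := hs1.count_le σ
  have hc2 := hs2.count_le σ
  have hc12 : S₁.count σ + S₂.count σ = S.count σ := by
    have := congrArg (List.count σ) hSsplit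
    rw [List.count_append] at this
    omega
  refine ⟨t ++ y :: Y₂, S₁, S₂, ?_, ?_, hVcnt, hSsplit, hs1, hs2, by omega, by omega, hc12⟩
  · rw [hYsplit]
    have h1 : Y₂ <+ y :: Y₂ := List.sublist_cons_self y Y₂
    have h2 := h1.append_left t
    have := h2.cons₂ σ
    simpa using this
  · rw [hYsplit]
    simp
    omega

theorem alg1_output_not_innerExtendable {α : Type*} [DecidableEq α] (S : List α) (σ : α)
    (hℓ : 2 ≤ S.count σ) (Y : List α) (hY : Alg1Output S σ Y) :
    ¬ InnerExtendable S Y := by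
  rintro ⟨y, Y₁, Y₂, hYsplit, hY₁ne, hY₂ne, hsub⟩
  obtain ⟨i1, ie1, Y₀, hocc1, hocce1, hMCS, hcase⟩ := hY
  have hdiv := Nat.div_add_mod (S.count σ) 2
  have hmod : S.count σ % 2 < 2 := Nat.mod_lt _ (by norm_num)
  obtain ⟨P, R₁, hSP, hPcnt, hi1⟩ := nthOcc_dest hocc1
  obtain ⟨Q, R₂, hSQ, hQcnt, hie1⟩ := nthOcc_dest hocce1
  have hPcnt0 : P.count σ = 0 := by omega
  have hQcnt' : Q.count σ = S.count σ / 2 := by omega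
  have hPQ : P ++ (σ :: R₁) = Q ++ (σ :: R₂) := by rw [← hSP, ← hSQ]
  rcases List.append_eq_append_iff.mp hPQ with ⟨T₁, hQeq, hT⟩ | ⟨M, hPeq, hM⟩
  swap
  · have := congrArg (List.count σ) hPeq
    rw [List.count_append] at this
    omega
  have hT₁cnt : T₁.count σ = S.count σ / 2 := by
    have := congrArg (List.count σ) hQeq
    rw [List.count_append] at this
    omega
  obtain ⟨M', hT₁head⟩ : ∃ M', T₁ = σ :: M' := by
    cases T₁ with
    | nil => simp at hT₁cnt; omega
    | cons x u =>
      injection hT with hx _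
      exact ⟨u, by rw [← hx]⟩
  have hS2 : S = (P ++ T₁) ++ (σ :: R₂) := by rw [hSQ, hQeq]
  have hR₂cnt : (σ :: R₂).count σ + S.count σ / 2 = S.count σ := by
    have := congrArg (List.count σ) hS2
    rw [List.count_append, List.count_append] at this
    omega
  have hlenQ : Q.length = P.length + T₁.length := by rw [hQeq]; simp
  have hsubT1 : substr S i1 (ie1 - 1) = T₁ := by
    have h0 := substr_mid P T₁ (σ :: R₂)
    rw [← List.append_assoc, ← hS2] at h0
    rw [hi1, hie1, hlenQ]
    simpa using h0
  have hsubT2 : substr S ie1 S.length = σ :: R₂ := by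
    have h0 := substr_suffix Q (σ :: R₂)
    rw [← hSQ] at h0
    rw [hie1]
    exact h0
  rw [hsubT1, hsubT2] at hMCS
  obtain ⟨hrep, hY₀T1, hY₀T2, hmax⟩ := hMCS
  have hY₀ge : S.count σ / 2 ≤ Y₀.count σ := by
    have := hrep.count_le σ
    simpa using this
  have hY₀cnt : Y₀.count σ = S.count σ / 2 := by
    have := hY₀T1.count_le σ
    omega
  rcases hcase with ⟨rfl, hclause⟩ | ⟨hodd, ie2, hocc2, hY₀suf, hMCS2⟩
  · -- Case (a): Y₀ has been identified with Y
    obtain ⟨Yt, hYhead⟩ : ∃ Yt, Y = σ :: Yt := by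
      apply head_sigma (hT₁head ▸ hY₀T1)
      rw [← hT₁head, hT₁cnt, hY₀cnt]
    obtain ⟨V', S₁, S₂, hYV, hVlen, hVcnt, hSsplit, hs1, hs2, hc1, hc2, hc12⟩ :=
      common_V hsub hYsplit hY₁ne hYhead hY₀cnt
    clear hsub hYsplit hY₁ne hY₂ne hocc1 hocce1 hSP hPcnt hi1 hSQ hQcnt hie1 hPQ hT
      hlenQ hsubT1 hsubT2 hYhead hQeq hT₁head hrep hY₀T1 hY₀T2 hY₀ge hQcnt'
    have hS12 : S₁ ++ S₂ = (P ++ T₁) ++ (σ :: R₂) := by rw [← hSsplit, hS2]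
    by_cases hce : S₁.count σ = S.count σ / 2
    · have hv1 : σ :: V' <+ T₁ := coreR hS12 hPcnt0 (by omega) hs1
      have hv2 : σ :: V' <+ σ :: R₂ := coreL hS12 (by omega) hs2
      have heq := hmax (σ :: V') hYV hv1 hv2
      have := congrArg List.length heq
      rw [hVlen] at this
      omega
    · have hO : Odd (S.count σ) := Nat.odd_iff.mpr (by omega)
      have hcc : (σ :: R₂).count σ = R₂.count σ + 1 := by simp
      have hRne : R₂.count σ ≠ 0 := by omega
      obtain ⟨U', R, hR₂eq, hU'0⟩ := exists_first hRne
      have hS3 : S = ((P ++ T₁) ++ (σ :: U')) ++ (σ :: R) := by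
        rw [hS2, hR₂eq]
        simp
      have hS12' : S₁ ++ S₂ = ((P ++ T₁) ++ (σ :: U')) ++ (σ :: R) := by
        rw [← hSsplit, hS3]
      have hcR : S₂.count σ = (σ :: R).count σ := by
        have h2 := congrArg (List.count σ) hR₂eq
        rw [List.count_append] at h2
        have h3 : (σ :: R).count σ = R.count σ + 1 := by simp
        omega
      have hv2 : σ :: V' <+ σ :: R := coreL hS12' hcR hs2
      have hcu : (σ :: U').count σ = 1 := by simp [hU'0]
      have hcnt3 : ((P ++ T₁) ++ (σ :: U')).count σ = S.count σ / 2 + 1 := by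
        rw [List.count_append, List.count_append, hPcnt0, hT₁cnt, hcu]
        omega
      have hocc2 := nthOcc_of ((P ++ T₁) ++ (σ :: U')) R σ
      rw [hcnt3, ← hS3,
        show S.count σ / 2 + 1 + 1 = S.count σ / 2 + 2 from by omega] at hocc2
      have hsubR : substr S (((P ++ T₁) ++ (σ :: U')).length + 1) S.length = σ :: R := by
        have h0 := substr_suffix ((P ++ T₁) ++ (σ :: U')) (σ :: R)
        rw [← hS3] at h0
        exact h0
      exact hclause hO _ hocc2 (by rw [hsubR]; exact hYV.trans hv2)
  · -- Case (b)
    obtain ⟨Q₂, R₃, hSQ₂, hQ₂cnt, hie2⟩ := nthOcc_dest hocc2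
    have hℓodd : S.count σ % 2 = 1 := Nat.odd_iff.mp hodd
    have hQ₂cnt' : Q₂.count σ = S.count σ / 2 + 1 := by omega
    have hQQ₂ : Q ++ (σ :: R₂) = Q₂ ++ (σ :: R₃) := by rw [← hSQ, ← hSQ₂]
    rcases List.append_eq_append_iff.mp hQQ₂ with ⟨U, hQ₂eq, hU⟩ | ⟨M, hQeq2, hM2⟩
    swap
    · have := congrArg (List.count σ) hQeq2
      rw [List.count_append] at this
      omega
    have hUcnt : U.count σ = 1 := by
      have := congrArg (List.count σ) hQ₂eq
      rw [List.count_append] at this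
      omega
    have hS4 : S = (P ++ (T₁ ++ U)) ++ (σ :: R₃) := by
      rw [hSQ₂, hQ₂eq, hQeq]
      simp
    have hR₃cnt : (σ :: R₃).count σ + (S.count σ / 2 + 1) = S.count σ := by
      have := congrArg (List.count σ) hSQ₂
      rw [List.count_append] at this
      omega
    have hlenQ₂ : Q₂.length = P.length + (T₁ ++ U).length := by
      rw [hQ₂eq, hQeq]
      simp
    have hsubB1 : substr S i1 (ie2 - 1) = T₁ ++ U := by
      have h0 := substr_mid P (T₁ ++ U) (σ :: R₃)
      rw [← List.append_assoc, ← hS4] at h0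
      rw [hi1, hie2, hlenQ₂]
      simpa using h0
    have hsubB2 : substr S ie2 S.length = σ :: R₃ := by
      have h0 := substr_suffix Q₂ (σ :: R₃)
      rw [← hSQ₂] at h0
      rw [hie2]
      exact h0
    rw [hsubB1, hsubB2] at hMCS2
    obtain ⟨hY₀Y, hYB1, hYB2, hmax2⟩ := hMCS2
    have hYcnt : Y.count σ = S.count σ / 2 := by
      have h1 := (hrep.trans hY₀Y).count_le σ
      simp at h1
      have h2 := hYB2.count_le σ
      omega
    obtain ⟨Yt, hYhead⟩ : ∃ Yt, Y = σ :: Yt := by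
      apply head_sigma hYB2
      omega
    obtain ⟨V', S₁, S₂, hYV, hVlen, hVcnt, hSsplit, hs1, hs2, hc1, hc2, hc12⟩ :=
      common_V hsub hYsplit hY₁ne hYhead hYcnt
    clear hsub hYsplit hY₁ne hY₂ne hocc1 hocce1 hocc2 hSP hPcnt hi1 hSQ hQcnt hie1 hPQ hT
      hlenQ hsubT1 hsubT2 hYhead hY₀suf hQQ₂ hie2 hlenQ₂ hQ₂cnt hQ₂cnt' hSQ₂ hQeq hQ₂eq
      hT₁head hsubB1 hsubB2 hrep hY₀T1 hY₀T2 hY₀ge hY₀cnt hQcnt' hYB1 hYB2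
    by_cases hce : S₁.count σ = S.count σ / 2
    · have hS12 : S₁ ++ S₂ = (P ++ T₁) ++ (σ :: R₂) := by rw [← hSsplit, hS2]
      have hv1 : σ :: V' <+ T₁ := coreR hS12 hPcnt0 (by omega) hs1
      have hv2 : σ :: V' <+ σ :: R₂ := coreL hS12 (by omega) hs2
      have heq := hmax (σ :: V') (hY₀Y.trans hYV) hv1 hv2
      have hlen2 := hY₀Y.length_le
      have := congrArg List.length heq
      rw [hVlen] at this
      omega
    · have hS12' : S₁ ++ S₂ = (P ++ (T₁ ++ U)) ++ (σ :: R₃) := by rw [← hSsplit, hS4]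
      have hv1 : σ :: V' <+ T₁ ++ U := by
        refine coreR hS12' hPcnt0 ?_ hs1
        rw [List.count_append]
        omega
      have hv2 : σ :: V' <+ σ :: R₃ := coreL hS12' (by omega) hs2
      have heq := hmax2 (σ :: V') hYV hv1 hv2
      have := congrArg List.length heq
      rw [hVlen] at this
      omega
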